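/- Let A be an m×n matrix and B an n×m matrix over a field F. Then i(I − AB) = i(I − BA); moreover, the minimal polynomial of I − BA divides (X − 1) times the minimal polynomial of I − AB, and the minimal polynomial of I − AB divides (X − 1) times the minimal polynomial of I − BA. -/
import Mathlib


open Matrix Polynomial

section Aux

variable {F : Type*} [Field F] {m n : ℕ}

private lemma intertwine_pow {B : Matrix (Fin n) (Fin m) F} {M : Matrix (Fin m) (Fin m) F}
    {N : Matrix (Fin n) (Fin n) F} (h : B * M = N * B) (k : ℕ) :
    B * M ^ k = N ^ k * B := by
  induction k with
  | zero => simp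
  | succ k ih =>
      rw [pow_succ, pow_succ, ← Matrix.mul_assoc, ih, Matrix.mul_assoc, h, ← Matrix.mul_assoc]

private lemma intertwine_aeval {B : Matrix (Fin n) (Fin m) F} {M : Matrix (Fin m) (Fin m) F}
    {N : Matrix (Fin n) (Fin n) F} (h : B * M = N * B) (p : F[X]) :
    B * aeval M p = aeval N p * B := by
  induction p using Polynomial.induction_on' with
  | add p q hp hq => simp [map_add, Matrix.mul_add, Matrix.add_mul, hp, hq]
  | monomial k a =>
      rw [aeval_monomial, aeval_monomial, ← Algebra.smul_def, ← Algebra.smul_def,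
        Matrix.mul_smul, Matrix.smul_mul, intertwine_pow h]

private lemma base_comm (A : Matrix (Fin m) (Fin n) F) (B : Matrix (Fin n) (Fin m) F) :
    B * (A * B) = (B * A) * B := by rw [Matrix.mul_assoc]

private lemma sub_comm (A : Matrix (Fin m) (Fin n) F) (B : Matrix (Fin n) (Fin m) F) :
    B * (1 - A * B) = (1 - B * A) * B := by
  rw [Matrix.mul_sub, Matrix.sub_mul, Matrix.mul_one, Matrix.one_mul, Matrix.mul_assoc]

private lemma exists_S (A : Matrix (Fin m) (Fin n) F) (B : Matrix (Fin n) (Fin m) F) (k : ℕ) :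
    ∃ S : Matrix (Fin n) (Fin n) F, (1 - A * B) ^ k = 1 - A * S * B := by
  obtain ⟨q, hq⟩ : (X : F[X]) ∣ 1 - (1 - (X : F[X])) ^ k := by
    rw [Polynomial.X_dvd_iff]
    simp [Polynomial.coeff_zero_eq_eval_zero]
  refine ⟨aeval (B * A) q, ?_⟩
  have h1 : (1 : Matrix (Fin m) (Fin m) F) - (1 - A * B) ^ k
      = aeval (A * B) (1 - (1 - (X : F[X])) ^ k) := by
    simp [map_sub, map_pow, _root_.map_one, aeval_X]
  rw [hq] at h1
  have h2 : aeval (A * B) ((X : F[X]) * q) = A * aeval (B * A) q * B := by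
    rw [_root_.map_mul, aeval_X, Matrix.mul_assoc, intertwine_aeval (base_comm A B) q,
      ← Matrix.mul_assoc]
  rw [h2] at h1
  rw [← h1, sub_sub_cancel]

private lemma comm_pow_sub (A : Matrix (Fin m) (Fin n) F) (B : Matrix (Fin n) (Fin m) F)
    (k : ℕ) : B * (1 - A * B) ^ k = (1 - B * A) ^ k * B :=
  intertwine_pow (sub_comm A B) k

private lemma finrank_ker_le (A : Matrix (Fin m) (Fin n) F) (B : Matrix (Fin n) (Fin m) F)
    (k : ℕ) :
    Module.finrank F (LinearMap.ker (((1 - A * B) ^ k).mulVecLin)) ≤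
      Module.finrank F (LinearMap.ker (((1 - B * A) ^ k).mulVecLin)) := by
  obtain ⟨S, hS⟩ := exists_S A B k
  set f := ((1 - A * B) ^ k).mulVecLin with hf
  set g := ((1 - B * A) ^ k).mulVecLin with hg
  have hmem : ∀ x : LinearMap.ker f, B.mulVecLin ((LinearMap.ker f).subtype x) ∈
      LinearMap.ker g := by
    intro x
    have hx : f x.1 = 0 := x.2
    rw [LinearMap.mem_ker]
    have h1 : g (B.mulVecLin x.1) = (((1 - B * A) ^ k) * B).mulVecLin x.1 := by
      rw [Matrix.mulVecLin_mul]; rfl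
    rw [Submodule.coe_subtype, h1, ← comm_pow_sub, Matrix.mulVecLin_mul]
    simp only [LinearMap.comp_apply]
    rw [← hf, hx, map_zero]
  let L : LinearMap.ker f →ₗ[F] LinearMap.ker g :=
    LinearMap.codRestrict _ (B.mulVecLin ∘ₗ (LinearMap.ker f).subtype) hmem
  have hinj : Function.Injective L := by
    intro x y hxy
    have hxy' : B.mulVecLin x.1 = B.mulVecLin y.1 := congrArg Subtype.val hxy
    have key : ∀ v : Fin m → F, f v = 0 → v = (A * S).mulVecLin (B.mulVecLin v) := by
      intro v hv
      have h2 : f v = v - (A * S * B).mulVecLin v := by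
        rw [hf, hS]
        simp [Matrix.mulVecLin, Matrix.sub_mulVec, Matrix.one_mulVec]
      rw [h2, sub_eq_zero] at hv
      rw [Matrix.mulVecLin_mul] at hv
      exact hv
    have hx2 := key x.1 x.2
    rw [hxy', ← key y.1 y.2] at hx2
    exact Subtype.ext hx2
  exact LinearMap.finrank_le_finrank_of_injective hinj

private lemma rank_add_ker (M : Matrix (Fin m) (Fin m) F) :
    M.rank + Module.finrank F (LinearMap.ker M.mulVecLin) = m := by
  rw [Matrix.rank, LinearMap.finrank_range_add_finrank_ker M.mulVecLin, Module.finrank_fin_fun]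

end Aux

/-- The Drazin index of a square matrix: the smallest natural number `k`
such that `rank (A ^ k) = rank (A ^ (k+1))`. -/
noncomputable def drazinIndex {n : Type*} [Fintype n] [DecidableEq n]
    {F : Type*} [Field F] (A : Matrix n n F) : ℕ :=
  sInf {k : ℕ | (A ^ k).rank = (A ^ (k + 1)).rank}

/-- `X` is the Drazin inverse of `A`:
`A^(k+1) * X = A^k`, `X * A * X = X`, `A * X = X * A` with `k = drazinIndex A`. -/
def IsDrazinInverse {n : Type*} [Fintype n] [DecidableEq n]
    {F : Type*} [Field F] (A X : Matrix n n F) : Prop :=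
  A ^ (drazinIndex A + 1) * X = A ^ drazinIndex A ∧ X * A * X = X ∧ A * X = X * A

/-- `i(I − AB) = i(I − BA)`, and the minimal polynomials of `I − AB`
and `I − BA` divide each other up to a factor `X − 1`. -/
theorem jacobson_index_minpoly {F : Type*} [Field F] {m n : ℕ}
    (A : Matrix (Fin m) (Fin n) F) (B : Matrix (Fin n) (Fin m) F) :
    drazinIndex (1 - A * B) = drazinIndex (1 - B * A) ∧
    minpoly F (1 - B * A) ∣ (Polynomial.X - 1) * minpoly F (1 - A * B) ∧
    minpoly F (1 - A * B) ∣ (Polynomial.X - 1) * minpoly F (1 - B * A) := by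
  have hker : ∀ k : ℕ, Module.finrank F (LinearMap.ker (((1 - A * B) ^ k).mulVecLin)) =
      Module.finrank F (LinearMap.ker (((1 - B * A) ^ k).mulVecLin)) :=
    fun k => le_antisymm (finrank_ker_le A B k) (finrank_ker_le B A k)
  have hdvd : ∀ {m' n' : ℕ} (A' : Matrix (Fin m') (Fin n') F) (B' : Matrix (Fin n') (Fin m') F),
      minpoly F (1 - B' * A') ∣ (Polynomial.X - 1) * minpoly F (1 - A' * B') := by
    intro m' n' A' B'
    apply minpoly.dvd
    rw [_root_.map_mul, map_sub, aeval_X, _root_.map_one, sub_sub_cancel_left,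
      neg_mul, Matrix.mul_assoc, intertwine_aeval (sub_comm B' A') (minpoly F (1 - A' * B')),
      minpoly.aeval, Matrix.zero_mul, Matrix.mul_zero, neg_zero]
  refine ⟨?_, hdvd A B, hdvd B A⟩
  unfold drazinIndex
  congr 1
  ext k
  simp only [Set.mem_setOf_eq]
  have e1 := rank_add_ker ((1 - A * B) ^ k)
  have e2 := rank_add_ker ((1 - A * B) ^ (k + 1))
  have e3 := rank_add_ker ((1 - B * A) ^ k)
  have e4 := rank_add_ker ((1 - B * A) ^ (k + 1))
  rw [hker k] at e1
  rw [hker (k + 1)] at e2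
  omega
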